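/- arXiv:0712.3962 — 4 statements merged into one kernel-verified Lean document; each statement's English description precedes it below -/
import Mathlib

section
/- Let g be a Lie algebra containing elements x_0, x_1, …, x_n, y_0, y_1, …, y_n and scalars t_1, …, t_n satisfying [x_0, y_0] = y_0, [x_0, x_i] = (1 − t_i)x_i, [x_0, y_i] = t_i y_i, [x_i, y_j] = δ_{ij} y_0, [x_i, x_j] = [y_i, y_j] = 0, [y_0, x_j] = [y_0, y_j] = 0 for i, j = 1,…,n. Then the two-tensor r = Σ_{ν=0}^n y_ν ∧ x_ν satisfies the homogeneous classical Yang–Baxter equation [r^{12}, r^{13}] + [r^{12}, r^{23}] + [r^{13}, r^{23}] = 0. -/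
open scoped TensorProduct

section helpers
variable {R : Type*} [CommRing R] {A : Type*} [Ring A] [Algebra R A]

private lemma lie_sum'' {L' : Type*} [LieRing L'] {κ : Type*} (s : Finset κ) (x : L') (f : κ → L') :
    ⁅x, ∑ i ∈ s, f i⁆ = ∑ i ∈ s, ⁅x, f i⁆ :=
  map_sum (AddMonoidHom.mk' (fun y => ⁅x, y⁆) (lie_add x)) f s

private lemma sum_lie'' {L' : Type*} [LieRing L'] {κ : Type*} (s : Finset κ) (x : L') (f : κ → L') :
    ⁅∑ i ∈ s, f i, x⁆ = ∑ i ∈ s, ⁅f i, x⁆ :=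
  map_sum (AddMonoidHom.mk' (fun y => ⁅y, x⁆) (fun a b => add_lie a b x)) f s

private lemma glie12_13 (p q p' q' : A) :
    ⁅p ⊗ₜ[R] (q ⊗ₜ[R] (1:A)), p' ⊗ₜ[R] ((1:A) ⊗ₜ[R] q')⁆ = ⁅p, p'⁆ ⊗ₜ[R] (q ⊗ₜ[R] q') := by
  simp [Ring.lie_def, Algebra.TensorProduct.tmul_mul_tmul, TensorProduct.sub_tmul]

private lemma glie12_23 (p q p' q' : A) :
    ⁅p ⊗ₜ[R] (q ⊗ₜ[R] (1:A)), (1:A) ⊗ₜ[R] (p' ⊗ₜ[R] q')⁆ = p ⊗ₜ[R] (⁅q, p'⁆ ⊗ₜ[R] q') := by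
  simp [Ring.lie_def, Algebra.TensorProduct.tmul_mul_tmul, TensorProduct.sub_tmul,
    TensorProduct.tmul_sub]

private lemma glie13_23 (p q p' q' : A) :
    ⁅p ⊗ₜ[R] ((1:A) ⊗ₜ[R] q), (1:A) ⊗ₜ[R] (p' ⊗ₜ[R] q')⁆ = p ⊗ₜ[R] (p' ⊗ₜ[R] ⁅q, q'⁆) := by
  simp [Ring.lie_def, Algebra.TensorProduct.tmul_mul_tmul, TensorProduct.sub_tmul,
    TensorProduct.tmul_sub]
end helpers

section specialized
variable {R L : Type*} [CommRing R] [LieRing L] [LieAlgebra R L]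
attribute [local instance] LieRing.ofAssociativeRing
local notation "UEA" => UniversalEnvelopingAlgebra R L
local notation "ιu" => UniversalEnvelopingAlgebra.ι R

private lemma sadd_lie (a b c : UEA ⊗[R] (UEA ⊗[R] UEA)) : ⁅a + b, c⁆ = ⁅a, c⁆ + ⁅b, c⁆ :=
  add_lie a b c
private lemma slie_add (a b c : UEA ⊗[R] (UEA ⊗[R] UEA)) : ⁅a, b + c⁆ = ⁅a, b⁆ + ⁅a, c⁆ :=
  lie_add a b c
private lemma ssub_lie (a b c : UEA ⊗[R] (UEA ⊗[R] UEA)) : ⁅a - b, c⁆ = ⁅a, c⁆ - ⁅b, c⁆ :=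
  sub_lie a b c
private lemma slie_sub (a b c : UEA ⊗[R] (UEA ⊗[R] UEA)) : ⁅a, b - c⁆ = ⁅a, b⁆ - ⁅a, c⁆ :=
  lie_sub a b c
private lemma ssum_lie {κ : Type*} (s : Finset κ) (f : κ → UEA ⊗[R] (UEA ⊗[R] UEA))
    (c : UEA ⊗[R] (UEA ⊗[R] UEA)) : ⁅∑ i ∈ s, f i, c⁆ = ∑ i ∈ s, ⁅f i, c⁆ :=
  sum_lie'' s c f
private lemma slie_sum {κ : Type*} (s : Finset κ) (f : κ → UEA ⊗[R] (UEA ⊗[R] UEA))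
    (c : UEA ⊗[R] (UEA ⊗[R] UEA)) : ⁅c, ∑ i ∈ s, f i⁆ = ∑ i ∈ s, ⁅c, f i⁆ :=
  lie_sum'' s c f
private lemma slie12_13 (p q p' q' : UEA) :
    ⁅p ⊗ₜ[R] (q ⊗ₜ[R] (1:UEA)), p' ⊗ₜ[R] ((1:UEA) ⊗ₜ[R] q')⁆ = ⁅p, p'⁆ ⊗ₜ[R] (q ⊗ₜ[R] q') :=
  glie12_13 p q p' q'
private lemma slie12_23 (p q p' q' : UEA) :
    ⁅p ⊗ₜ[R] (q ⊗ₜ[R] (1:UEA)), (1:UEA) ⊗ₜ[R] (p' ⊗ₜ[R] q')⁆ = p ⊗ₜ[R] (⁅q, p'⁆ ⊗ₜ[R] q') :=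
  glie12_23 p q p' q'
private lemma slie13_23 (p q p' q' : UEA) :
    ⁅p ⊗ₜ[R] ((1:UEA) ⊗ₜ[R] q), (1:UEA) ⊗ₜ[R] (p' ⊗ₜ[R] q')⁆ = p ⊗ₜ[R] (p' ⊗ₜ[R] ⁅q, q'⁆) :=
  glie13_23 p q p' q'
private lemma iota_zero : (ιu (0 : L) : UEA) = 0 := map_zero _
private lemma iota_neg (a : L) : (ιu (-a) : UEA) = -ιu a := map_neg _ a
private lemma iota_smul (c : R) (a : L) : (ιu (c • a) : UEA) = c • ιu a := map_smul _ c a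
private lemma iota_add (a b : L) : (ιu (a + b) : UEA) = ιu a + ιu b := map_add _ a b
private lemma iota_sub (a b : L) : (ιu (a - b) : UEA) = ιu a - ιu b := map_sub _ a b

private lemma lie_iota (a b : L) : ⁅(ιu a : UEA), ιu b⁆ = ιu ⁅a, b⁆ :=
  ((UniversalEnvelopingAlgebra.ι R).map_lie a b).symm

private lemma ts1 (c : R) (a : UEA) (w : UEA ⊗[R] UEA) :
    (c • a) ⊗ₜ[R] w = c • (a ⊗ₜ[R] w) := (TensorProduct.smul_tmul' c a w).symm
private lemma ts1' (c : R) (a b : UEA) :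
    (c • a) ⊗ₜ[R] b = c • (a ⊗ₜ[R] b) := (TensorProduct.smul_tmul' c a b).symm
private lemma ts2 (a : UEA) (c : R) (w : UEA ⊗[R] UEA) :
    a ⊗ₜ[R] (c • w) = c • (a ⊗ₜ[R] w) := TensorProduct.tmul_smul c a w
private lemma ts2' (a : UEA) (c : R) (b : UEA) :
    a ⊗ₜ[R] (c • b) = c • (a ⊗ₜ[R] b) := TensorProduct.tmul_smul c a b
private lemma tn1 (a : UEA) (w : UEA ⊗[R] UEA) :
    (-a) ⊗ₜ[R] w = -(a ⊗ₜ[R] w) := TensorProduct.neg_tmul a w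
private lemma tn1' (a b : UEA) : (-a) ⊗ₜ[R] b = -(a ⊗ₜ[R] b) := TensorProduct.neg_tmul a b
private lemma tn2 (a : UEA) (w : UEA ⊗[R] UEA) :
    a ⊗ₜ[R] (-w) = -(a ⊗ₜ[R] w) := TensorProduct.tmul_neg a w
private lemma tn2' (a b : UEA) : a ⊗ₜ[R] (-b) = -(a ⊗ₜ[R] b) := TensorProduct.tmul_neg a b
private lemma tsub1 (a b : UEA) (w : UEA ⊗[R] UEA) :
    (a - b) ⊗ₜ[R] w = a ⊗ₜ[R] w - b ⊗ₜ[R] w := TensorProduct.sub_tmul a b w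
private lemma tsub1' (a b c : UEA) :
    (a - b) ⊗ₜ[R] c = a ⊗ₜ[R] c - b ⊗ₜ[R] c := TensorProduct.sub_tmul a b c
private lemma tsub2 (a : UEA) (w v : UEA ⊗[R] UEA) :
    a ⊗ₜ[R] (w - v) = a ⊗ₜ[R] w - a ⊗ₜ[R] v := TensorProduct.tmul_sub a w v
private lemma tsub2' (a b c : UEA) :
    a ⊗ₜ[R] (b - c) = a ⊗ₜ[R] b - a ⊗ₜ[R] c := TensorProduct.tmul_sub a b c
private lemma tadd1 (a b : UEA) (w : UEA ⊗[R] UEA) :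
    (a + b) ⊗ₜ[R] w = a ⊗ₜ[R] w + b ⊗ₜ[R] w := TensorProduct.add_tmul a b w
private lemma tadd1' (a b c : UEA) :
    (a + b) ⊗ₜ[R] c = a ⊗ₜ[R] c + b ⊗ₜ[R] c := TensorProduct.add_tmul a b c
private lemma tadd2 (a : UEA) (w v : UEA ⊗[R] UEA) :
    a ⊗ₜ[R] (w + v) = a ⊗ₜ[R] w + a ⊗ₜ[R] v := TensorProduct.tmul_add a w v
private lemma tadd2' (a b c : UEA) :
    a ⊗ₜ[R] (b + c) = a ⊗ₜ[R] b + a ⊗ₜ[R] c := TensorProduct.tmul_add a b c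
private lemma tz1 (w : UEA ⊗[R] UEA) : (0 : UEA) ⊗ₜ[R] w = 0 := TensorProduct.zero_tmul _ w
private lemma tz1' (b : UEA) : (0 : UEA) ⊗ₜ[R] b = 0 := TensorProduct.zero_tmul _ b
private lemma tz2 (a : UEA) : a ⊗ₜ[R] (0 : UEA ⊗[R] UEA) = 0 := TensorProduct.tmul_zero _ a
private lemma tz2' (a : UEA) : a ⊗ₜ[R] (0 : UEA) = 0 := TensorProduct.tmul_zero _ a
private lemma ti1 (P : Prop) [Decidable P] (a : UEA) (w : UEA ⊗[R] UEA) :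
    (if P then a else 0) ⊗ₜ[R] w = if P then a ⊗ₜ[R] w else 0 := TensorProduct.ite_tmul a w P
private lemma ti1' (P : Prop) [Decidable P] (a b : UEA) :
    (if P then a else 0) ⊗ₜ[R] b = if P then a ⊗ₜ[R] b else 0 := TensorProduct.ite_tmul a b P
private lemma ti2 (P : Prop) [Decidable P] (a : UEA) (w : UEA ⊗[R] UEA) :
    (a ⊗ₜ[R] if P then w else 0) = if P then a ⊗ₜ[R] w else 0 := TensorProduct.tmul_ite a w P
private lemma ti2' (P : Prop) [Decidable P] (a b : UEA) :
    (a ⊗ₜ[R] if P then b else 0) = if P then a ⊗ₜ[R] b else 0 := TensorProduct.tmul_ite a b P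

private theorem aux (n : ℕ) (x0 y0 : L) (x y : Fin n → L) (t : Fin n → R)
    (h00 : ⁅x0, y0⁆ = y0)
    (h0x : ∀ i, ⁅x0, x i⁆ = (1 - t i) • x i)
    (h0y : ∀ i, ⁅x0, y i⁆ = t i • y i)
    (hxy : ∀ i j, ⁅x i, y j⁆ = if i = j then y0 else 0)
    (hxx : ∀ i j, ⁅x i, x j⁆ = 0)
    (hyy : ∀ i j, ⁅y i, y j⁆ = 0)
    (hy0x : ∀ j, ⁅y0, x j⁆ = 0)
    (hy0y : ∀ j, ⁅y0, y j⁆ = 0) :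
    ⁅(ιu y0 ⊗ₜ[R] (ιu x0 ⊗ₜ[R] (1 : UEA)) - ιu x0 ⊗ₜ[R] (ιu y0 ⊗ₜ[R] (1 : UEA))) +
      ∑ i, (ιu (y i) ⊗ₜ[R] (ιu (x i) ⊗ₜ[R] (1 : UEA)) - ιu (x i) ⊗ₜ[R] (ιu (y i) ⊗ₜ[R] (1 : UEA))),
     (ιu y0 ⊗ₜ[R] ((1 : UEA) ⊗ₜ[R] ιu x0) - ιu x0 ⊗ₜ[R] ((1 : UEA) ⊗ₜ[R] ιu y0)) +
      ∑ i, (ιu (y i) ⊗ₜ[R] ((1 : UEA) ⊗ₜ[R] ιu (x i)) - ιu (x i) ⊗ₜ[R] ((1 : UEA) ⊗ₜ[R] ιu (y i)))⁆ +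
    ⁅(ιu y0 ⊗ₜ[R] (ιu x0 ⊗ₜ[R] (1 : UEA)) - ιu x0 ⊗ₜ[R] (ιu y0 ⊗ₜ[R] (1 : UEA))) +
      ∑ i, (ιu (y i) ⊗ₜ[R] (ιu (x i) ⊗ₜ[R] (1 : UEA)) - ιu (x i) ⊗ₜ[R] (ιu (y i) ⊗ₜ[R] (1 : UEA))),
     ((1 : UEA) ⊗ₜ[R] (ιu y0 ⊗ₜ[R] ιu x0) - (1 : UEA) ⊗ₜ[R] (ιu x0 ⊗ₜ[R] ιu y0)) +
      ∑ i, ((1 : UEA) ⊗ₜ[R] (ιu (y i) ⊗ₜ[R] ιu (x i)) - (1 : UEA) ⊗ₜ[R] (ιu (x i) ⊗ₜ[R] ιu (y i)))⁆ +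
    ⁅(ιu y0 ⊗ₜ[R] ((1 : UEA) ⊗ₜ[R] ιu x0) - ιu x0 ⊗ₜ[R] ((1 : UEA) ⊗ₜ[R] ιu y0)) +
      ∑ i, (ιu (y i) ⊗ₜ[R] ((1 : UEA) ⊗ₜ[R] ιu (x i)) - ιu (x i) ⊗ₜ[R] ((1 : UEA) ⊗ₜ[R] ιu (y i))),
     ((1 : UEA) ⊗ₜ[R] (ιu y0 ⊗ₜ[R] ιu x0) - (1 : UEA) ⊗ₜ[R] (ιu x0 ⊗ₜ[R] ιu y0)) +
      ∑ i, ((1 : UEA) ⊗ₜ[R] (ιu (y i) ⊗ₜ[R] ιu (x i)) - (1 : UEA) ⊗ₜ[R] (ιu (x i) ⊗ₜ[R] ιu (y i)))⁆ = 0 := by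
  have hx0x0 : ⁅x0, x0⁆ = 0 := lie_self x0
  have hy0y0 : ⁅y0, y0⁆ = 0 := lie_self y0
  have hy0x0 : ⁅y0, x0⁆ = -y0 := by rw [← lie_skew, h00]
  have hxx0 : ∀ i, ⁅x i, x0⁆ = -((1 - t i) • x i) := fun i => by rw [← lie_skew, h0x]
  have hyx0 : ∀ i, ⁅y i, x0⁆ = -(t i • y i) := fun i => by rw [← lie_skew, h0y]
  have hyx : ∀ i j, ⁅y j, x i⁆ = -(if i = j then y0 else 0) := fun i j => by
    rw [← lie_skew, hxy]
  have hxy0 : ∀ i, ⁅x i, y0⁆ = 0 := fun i => by rw [← lie_skew, hy0x, neg_zero]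
  have hyy0 : ∀ i, ⁅y i, y0⁆ = 0 := fun i => by rw [← lie_skew, hy0y, neg_zero]
  simp only [sadd_lie, slie_add, ssub_lie, slie_sub, slie_sum, ssum_lie,
    slie12_13, slie12_23, slie13_23, lie_iota]
  simp only [h00, h0x, h0y, hxy, hxx, hyy, hy0x, hy0y, hx0x0, hy0y0, hy0x0, hxx0, hyx0, hyx,
    hxy0, hyy0]
  simp only [iota_zero, iota_neg, iota_smul, iota_add, iota_sub, sub_smul, one_smul,
    apply_ite (fun v => (UniversalEnvelopingAlgebra.ι R v : UniversalEnvelopingAlgebra R L)),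
    ts1, ts1', ts2, ts2', tn1, tn1', tn2, tn2', tsub1, tsub1', tsub2, tsub2',
    tadd1, tadd1', tadd2, tadd2', tz1, tz1', tz2, tz2', ti1, ti1', ti2, ti2',
    smul_ite, smul_zero, neg_zero, smul_neg, smul_sub, smul_add,
    Finset.sum_ite_eq, Finset.sum_ite_eq', Finset.mem_univ, if_true,
    Finset.sum_const_zero, zero_sub, sub_zero, neg_neg, sub_self,
    Finset.sum_sub_distrib, Finset.sum_add_distrib, Finset.sum_neg_distrib]
  abel

end specialized

/-- An r-matrix of Jordanian type satisfies the homogeneous CYBE. -/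
theorem jordanian_r_matrix_cybe {R L : Type*} [CommRing R] [LieRing L] [LieAlgebra R L]
    (n : ℕ) (x0 y0 : L) (x y : Fin n → L) (t : Fin n → R)
    (h00 : ⁅x0, y0⁆ = y0)
    (h0x : ∀ i, ⁅x0, x i⁆ = (1 - t i) • x i)
    (h0y : ∀ i, ⁅x0, y i⁆ = t i • y i)
    (hxy : ∀ i j, ⁅x i, y j⁆ = if i = j then y0 else 0)
    (hxx : ∀ i j, ⁅x i, x j⁆ = 0)
    (hyy : ∀ i j, ⁅y i, y j⁆ = 0)
    (hy0x : ∀ j, ⁅y0, x j⁆ = 0)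
    (hy0y : ∀ j, ⁅y0, y j⁆ = 0) :
    let A := UniversalEnvelopingAlgebra R L
    let ι : L → A := fun v => UniversalEnvelopingAlgebra.ι R v
    -- r = Σ_{ν=0}^{n} y_ν ∧ x_ν, with y ∧ x := y ⊗ x − x ⊗ y, embedded in U(g)^{⊗3}
    let r12 : A ⊗[R] (A ⊗[R] A) :=
      (ι y0 ⊗ₜ[R] (ι x0 ⊗ₜ[R] (1 : A)) - ι x0 ⊗ₜ[R] (ι y0 ⊗ₜ[R] (1 : A))) +
      ∑ i, (ι (y i) ⊗ₜ[R] (ι (x i) ⊗ₜ[R] (1 : A)) - ι (x i) ⊗ₜ[R] (ι (y i) ⊗ₜ[R] (1 : A)))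
    let r13 : A ⊗[R] (A ⊗[R] A) :=
      (ι y0 ⊗ₜ[R] ((1 : A) ⊗ₜ[R] ι x0) - ι x0 ⊗ₜ[R] ((1 : A) ⊗ₜ[R] ι y0)) +
      ∑ i, (ι (y i) ⊗ₜ[R] ((1 : A) ⊗ₜ[R] ι (x i)) - ι (x i) ⊗ₜ[R] ((1 : A) ⊗ₜ[R] ι (y i)))
    let r23 : A ⊗[R] (A ⊗[R] A) :=
      ((1 : A) ⊗ₜ[R] (ι y0 ⊗ₜ[R] ι x0) - (1 : A) ⊗ₜ[R] (ι x0 ⊗ₜ[R] ι y0)) +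
      ∑ i, ((1 : A) ⊗ₜ[R] (ι (y i) ⊗ₜ[R] ι (x i)) - (1 : A) ⊗ₜ[R] (ι (x i) ⊗ₜ[R] ι (y i)))
    ⁅r12, r13⁆ + ⁅r12, r23⁆ + ⁅r13, r23⁆ = 0 := by
  exact aux n x0 y0 x y t h00 h0x h0y hxy hxx hyy hy0x hy0y
end

section
/- With h, e satisfying [h, e] = e, the Jordanian twist admits the binomial expansion exp(2h ⊗ σ) = (1 ⊗ 1 + 1 ⊗ ξe)^{h ⊗ 1} = Σ_{k≥0} (ξ^k/k!) · h(h−1)⋯(h−k+1) ⊗ e^k, where σ = ½ log(1 + ξ e). -/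
open scoped TensorProduct

/-- Exponential of a formal power series (with zero constant term) over a `ℚ`-algebra. -/
noncomputable def expPS {A : Type*} [Ring A] [Algebra ℚ A] (X : PowerSeries A) :
    PowerSeries A :=
  PowerSeries.mk fun m =>
    ∑ n ∈ Finset.range (m + 1), ((n.factorial : ℚ)⁻¹) • (PowerSeries.coeff m) (X ^ n)

/-- The falling factorial `a(a−1)⋯(a−k+1)` of an element of a ring. -/
noncomputable def fallFac {A : Type*} [Ring A] (a : A) (k : ℕ) : A :=
  ((List.range k).map (fun j : ℕ => a - (j : A))).prod

section JordanAux
open PowerSeries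

lemma fallFac_zero {A : Type*} [Ring A] (a : A) : fallFac a 0 = 1 := by
  simp [fallFac]

lemma fallFac_succ {A : Type*} [Ring A] (a : A) (k : ℕ) :
    fallFac a (k + 1) = fallFac a k * (a - (k : A)) := by
  simp [fallFac, List.range_succ]

lemma map_fallFac {A B : Type*} [Ring A] [Ring B] (f : A →+* B) (a : A) (k : ℕ) :
    f (fallFac a k) = fallFac (f a) k := by
  induction k with
  | zero => simp [fallFac_zero]
  | succ k ih => rw [fallFac_succ, map_mul, ih, map_sub, map_natCast, fallFac_succ]

lemma coeff_pow_eq_zero {R : Type*} [Ring R] {X : PowerSeries R}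
    (hX : PowerSeries.constantCoeff X = 0) {m n : ℕ} (hmn : m < n) :
    PowerSeries.coeff m (X ^ n) = 0 := by
  induction n generalizing m with
  | zero => omega
  | succ n ih =>
    rw [pow_succ, PowerSeries.coeff_mul]
    apply Finset.sum_eq_zero
    rintro ⟨j, k⟩ hjk
    rw [Finset.HasAntidiagonal.mem_antidiagonal] at hjk
    rcases Nat.eq_zero_or_pos k with hk | hk
    · subst hk
      rw [PowerSeries.coeff_zero_eq_constantCoeff, hX, mul_zero]
    · have : j < n := by omega
      rw [ih this, zero_mul]

lemma coeff_expPS_eq {A : Type*} [Ring A] [Algebra ℚ A] {X : PowerSeries A}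
    (hX : PowerSeries.constantCoeff X = 0) {m M : ℕ} (hmM : m ≤ M) :
    PowerSeries.coeff m (expPS X)
      = PowerSeries.coeff m
          (∑ n ∈ Finset.range (M + 1), ((n.factorial : ℚ)⁻¹) • X ^ n) := by
  rw [map_sum]
  simp only [PowerSeries.coeff_smul]
  rw [expPS, PowerSeries.coeff_mk]
  apply Finset.sum_subset
  · exact Finset.range_subset_range.mpr (by omega)
  · intro n hn hn'
    rw [Finset.mem_range] at hn hn'
    rw [coeff_pow_eq_zero hX (by omega), smul_zero]

section Comm
variable {R : Type*} [CommRing R] [Algebra ℚ R]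

lemma deriv_qsmul (q : ℚ) (f : PowerSeries R) :
    d⁄dX R (q • f) = q • d⁄dX R f := by
  ext m
  rw [PowerSeries.coeff_derivative, PowerSeries.coeff_smul, PowerSeries.coeff_smul,
    PowerSeries.coeff_derivative, smul_mul_assoc]

lemma deriv_partial_sum (X : PowerSeries R) (M : ℕ) :
    d⁄dX R (∑ n ∈ Finset.range (M + 2), ((n.factorial : ℚ)⁻¹) • X ^ n)
      = d⁄dX R X * ∑ n ∈ Finset.range (M + 1), ((n.factorial : ℚ)⁻¹) • X ^ n := by
  rw [map_sum]
  rw [Finset.sum_range_succ']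
  simp only [deriv_qsmul, Derivation.leibniz_pow, smul_eq_mul]
  rw [Finset.mul_sum]
  have h0 : ((Nat.factorial 0 : ℚ)⁻¹) • ((0 : ℕ) • (X ^ (0 - 1) * d⁄dX R X)) = 0 := by
    simp
  rw [h0, add_zero]
  apply Finset.sum_congr rfl
  intro n _
  have : ((n + 1 : ℕ) : ℚ) ≠ 0 := by positivity
  rw [← Nat.cast_smul_eq_nsmul ℚ (n + 1), smul_smul]
  have harith : ((Nat.factorial (n + 1) : ℚ)⁻¹) * ((n + 1 : ℕ) : ℚ)
      = (Nat.factorial n : ℚ)⁻¹ := by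
    rw [Nat.factorial_succ]
    push_cast
    field_simp
  rw [harith]
  rw [Nat.add_sub_cancel]
  rw [mul_smul_comm]
  ring_nf

lemma exp_deriv {X : PowerSeries R} (hX : PowerSeries.constantCoeff X = 0) :
    d⁄dX R (expPS X) = d⁄dX R X * expPS X := by
  ext m
  rw [PowerSeries.coeff_derivative]
  rw [coeff_expPS_eq hX (le_refl (m + 1))]
  rw [← PowerSeries.coeff_derivative]
  rw [deriv_partial_sum X m]
  rw [PowerSeries.coeff_mul, PowerSeries.coeff_mul]
  apply Finset.sum_congr rfl
  rintro ⟨j, k⟩ hjk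
  rw [Finset.HasAntidiagonal.mem_antidiagonal] at hjk
  congr 1
  exact (coeff_expPS_eq hX (by omega)).symm

lemma key_comm (H E : R) :
    expPS (PowerSeries.mk fun m =>
        if m = 0 then 0 else (((-1 : ℚ) ^ (m + 1)) / (m : ℚ)) • (H * E ^ m))
      = PowerSeries.mk fun m => ((m.factorial : ℚ)⁻¹) • (fallFac H m * E ^ m) := by
  set XB : PowerSeries R := PowerSeries.mk fun m =>
      if m = 0 then 0 else (((-1 : ℚ) ^ (m + 1)) / (m : ℚ)) • (H * E ^ m) with hXB
  have hX0 : PowerSeries.constantCoeff XB = 0 := by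
    rw [← PowerSeries.coeff_zero_eq_constantCoeff_apply, hXB, PowerSeries.coeff_mk]
    simp
  have hdX : d⁄dX R XB = PowerSeries.mk fun m => ((-1 : ℚ) ^ m) • (H * E ^ (m + 1)) := by
    ext m
    rw [PowerSeries.coeff_derivative, PowerSeries.coeff_mk, PowerSeries.coeff_mk]
    rw [if_neg (Nat.succ_ne_zero m)]
    rw [mul_comm]
    rw [show ((m : R) + 1) = ((m + 1 : ℕ) : R) by push_cast; ring]
    rw [← nsmul_eq_mul, ← Nat.cast_smul_eq_nsmul ℚ, smul_smul]
    congr 1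
    have : ((m + 1 : ℕ) : ℚ) ≠ 0 := by positivity
    push_cast
    field_simp
    ring
  have hODE : (1 + PowerSeries.C E * PowerSeries.X) * d⁄dX R XB
      = PowerSeries.C (H * E) := by
    rw [hdX]
    ext m
    rw [add_mul, one_mul, map_add, mul_assoc, PowerSeries.coeff_C_mul, PowerSeries.coeff_C]
    cases m with
    | zero =>
      simp [PowerSeries.coeff_mk, PowerSeries.coeff_zero_X_mul]
    | succ k =>
      rw [PowerSeries.coeff_succ_X_mul, PowerSeries.coeff_mk, PowerSeries.coeff_mk,
        if_neg (Nat.succ_ne_zero k)]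
      have h1 : E * ((-1 : ℚ) ^ k • (H * E ^ (k + 1))) = (-1 : ℚ) ^ k • (H * E ^ (k + 2)) := by
        rw [mul_smul_comm]
        congr 1
        ring
      rw [h1, pow_succ, mul_smul]
      rw [show k + 1 + 1 = k + 2 from rfl]
      rw [← smul_add]
      simp
  set F : PowerSeries R := expPS XB with hF
  have hmain : d⁄dX R F = d⁄dX R XB * F := exp_deriv hX0
  have hODE2 : (1 + PowerSeries.C E * PowerSeries.X) * d⁄dX R F
      = PowerSeries.C (H * E) * F := by
    rw [hmain, ← mul_assoc, hODE]
  have hrec : ∀ m, PowerSeries.coeff (m + 1) F * ((m + 1 : ℕ) : R)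
      = (H - (m : R)) * E * PowerSeries.coeff m F := by
    intro m
    have h1 := congrArg (PowerSeries.coeff m) hODE2
    rw [add_mul, one_mul, map_add, mul_assoc, PowerSeries.coeff_C_mul,
      PowerSeries.coeff_C_mul] at h1
    cases m with
    | zero =>
      rw [PowerSeries.coeff_zero_X_mul, mul_zero, add_zero, PowerSeries.coeff_derivative] at h1
      push_cast
      linear_combination h1
    | succ k =>
      rw [PowerSeries.coeff_succ_X_mul, PowerSeries.coeff_derivative,
        PowerSeries.coeff_derivative] at h1
      push_cast
      push_cast at h1
      linear_combination h1
  have hbase : PowerSeries.coeff 0 F = 1 := by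
    rw [hF, expPS, PowerSeries.coeff_mk]
    simp
  ext m
  rw [PowerSeries.coeff_mk]
  induction m with
  | zero => rw [hbase]; simp [fallFac_zero]
  | succ m ih =>
    have h2 := hrec m
    rw [ih] at h2
    rw [mul_comm, ← nsmul_eq_mul, ← Nat.cast_smul_eq_nsmul ℚ] at h2
    have hne : ((m + 1 : ℕ) : ℚ) ≠ 0 := by positivity
    have h3 := congrArg (fun y => (((m + 1 : ℕ) : ℚ))⁻¹ • y) h2
    simp only [smul_smul, inv_mul_cancel₀ hne, one_smul] at h3
    rw [h3, mul_smul_comm, smul_smul]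
    congr 1
    · rw [Nat.factorial_succ]
      push_cast
      rw [mul_inv]
    · rw [fallFac_succ]
      ring
end Comm

lemma map_expPS {A A' : Type*} [Ring A] [Algebra ℚ A] [Ring A'] [Algebra ℚ A']
    (f : A →ₐ[ℚ] A') (X : PowerSeries A) :
    PowerSeries.map f.toRingHom (expPS X) = expPS (PowerSeries.map f.toRingHom X) := by
  ext m
  rw [PowerSeries.coeff_map, expPS, expPS, PowerSeries.coeff_mk, PowerSeries.coeff_mk]
  simp only [AlgHom.toRingHom_eq_coe, RingHom.coe_coe]
  rw [map_sum]
  refine Finset.sum_congr rfl fun n _ => ?_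
  rw [map_smul]
  congr 1
  rw [← map_pow (PowerSeries.map (f : A →+* A')), PowerSeries.coeff_map]
  simp only [RingHom.coe_coe]


end JordanAux

/-- the binomial expansion of the Jordanian twist:
`exp(2h ⊗ σ) = (1⊗1 + 1⊗ξe)^{h⊗1} = Σ_k (ξ^k/k!) h(h−1)⋯(h−k+1) ⊗ e^k`. -/
theorem jordanian_twist_binomial {A : Type*} [Ring A] [Algebra ℚ A]
    (h e : A) (hhe : h * e - e * h = e) :
    let σ : PowerSeries A :=
      PowerSeries.mk fun m => if m = 0 then 0 else (((-1 : ℚ) ^ (m + 1)) / (2 * m)) • e ^ m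
    let X : PowerSeries (A ⊗[ℚ] A) :=
      PowerSeries.mk fun m => (2 : ℚ) • (h ⊗ₜ[ℚ] (PowerSeries.coeff m σ))
    -- the binomial series (1⊗1 + 1⊗ξe)^{h⊗1} = Σ_k (ξ^k/k!)(h⊗1)((h⊗1)−1)⋯((h⊗1)−k+1)(1⊗e)^k
    let binom : PowerSeries (A ⊗[ℚ] A) :=
      PowerSeries.mk fun m =>
        ((m.factorial : ℚ)⁻¹) • (fallFac (h ⊗ₜ[ℚ] (1 : A)) m * ((1 : A) ⊗ₜ[ℚ] (e ^ m)))
    -- Σ_k (ξ^k/k!) h(h−1)⋯(h−k+1) ⊗ e^k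
    let rhs : PowerSeries (A ⊗[ℚ] A) :=
      PowerSeries.mk fun m => ((m.factorial : ℚ)⁻¹) • (fallFac h m ⊗ₜ[ℚ] (e ^ m))
    expPS X = binom ∧ binom = rhs := by
  intro σ X binom rhs
  have hXdef : X = PowerSeries.mk fun m => (2 : ℚ) • (h ⊗ₜ[ℚ]
      (if m = 0 then 0 else (((-1 : ℚ) ^ (m + 1)) / (2 * m)) • e ^ m)) := by
    ext m
    rw [PowerSeries.coeff_mk, PowerSeries.coeff_mk, PowerSeries.coeff_mk]
  have hfall : ∀ m : ℕ, fallFac (h ⊗ₜ[ℚ] (1 : A)) m = (fallFac h m) ⊗ₜ[ℚ] (1 : A) := by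
    intro m
    have := map_fallFac
      (Algebra.TensorProduct.includeLeft (R := ℚ) (S := ℚ) (A := A) (B := A)).toRingHom h m
    simpa using this.symm
  have hsecond : binom = rhs := by
    ext m
    rw [PowerSeries.coeff_mk, PowerSeries.coeff_mk, hfall m,
      Algebra.TensorProduct.tmul_mul_tmul, mul_one, one_mul]
  refine ⟨?_, hsecond⟩
  -- the universal commutative model
  set B := (Polynomial ℚ) ⊗[ℚ] (Polynomial ℚ) with hB
  set Ψ : B →ₐ[ℚ] (A ⊗[ℚ] A) :=
    Algebra.TensorProduct.map (Polynomial.aeval h) (Polynomial.aeval e) with hΨ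
  set H : B := (Polynomial.X : Polynomial ℚ) ⊗ₜ[ℚ] (1 : Polynomial ℚ) with hH
  set E : B := (1 : Polynomial ℚ) ⊗ₜ[ℚ] (Polynomial.X : Polynomial ℚ) with hE
  have hΨH : Ψ H = h ⊗ₜ[ℚ] (1 : A) := by
    rw [hΨ, hH, Algebra.TensorProduct.map_tmul, Polynomial.aeval_X, map_one]
  have hΨE : Ψ E = (1 : A) ⊗ₜ[ℚ] e := by
    rw [hΨ, hE, Algebra.TensorProduct.map_tmul, Polynomial.aeval_X, map_one]
  have hEpow : ∀ m : ℕ, E ^ m = (1 : Polynomial ℚ) ⊗ₜ[ℚ] ((Polynomial.X : Polynomial ℚ) ^ m) := by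
    intro m
    rw [hE, Algebra.TensorProduct.tmul_pow, one_pow]
  set XB : PowerSeries B := PowerSeries.mk fun m =>
      if m = 0 then 0 else (((-1 : ℚ) ^ (m + 1)) / (m : ℚ)) • (H * E ^ m) with hXB
  have hΨHE : ∀ m : ℕ, Ψ (H * E ^ m) = h ⊗ₜ[ℚ] (e ^ m) := by
    intro m
    rw [map_mul, hΨH, hEpow m, hΨ, Algebra.TensorProduct.map_tmul, map_one, map_pow,
      Polynomial.aeval_X, Algebra.TensorProduct.tmul_mul_tmul, mul_one, one_mul]
  have hmapXB : PowerSeries.map Ψ.toRingHom XB = X := by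
    rw [hXdef]
    ext m
    rw [PowerSeries.coeff_map, hXB, PowerSeries.coeff_mk, PowerSeries.coeff_mk]
    simp only [AlgHom.toRingHom_eq_coe, RingHom.coe_coe]
    rcases Nat.eq_zero_or_pos m with hm | hm
    · subst hm
      simp
    · rw [if_neg (by omega), if_neg (by omega)]
      rw [map_smul, hΨHE m]
      rw [TensorProduct.tmul_smul, smul_smul]
      congr 1
      have hm2 : (m : ℚ) ≠ 0 := by positivity
      field_simp
  have hkey := key_comm H E
  have hmapped := congrArg (PowerSeries.map Ψ.toRingHom) hkey
  rw [map_expPS, hmapXB] at hmapped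
  rw [hmapped]
  ext m
  rw [PowerSeries.coeff_map, PowerSeries.coeff_mk, PowerSeries.coeff_mk]
  simp only [AlgHom.toRingHom_eq_coe, RingHom.coe_coe]
  rw [map_smul, map_mul]
  congr 2
  · have h4 := map_fallFac (Ψ : B →+* (A ⊗[ℚ] A)) H m
    simp only [RingHom.coe_coe] at h4
    rw [h4, hΨH]
  · rw [hEpow m, hΨ, Algebra.TensorProduct.map_tmul, map_one, map_pow, Polynomial.aeval_X]
end

section
/- In U(b)[[ξ]] with [h, e] = e, the identity Σ_{k≥0} ((−ξ)^k/k!) h(h−1)⋯(h−k+1) e^k = exp(−ξ h e) holds as formal power series in ξ. -/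
open scoped TensorProduct

/-- in `U(b)[[ξ]]` with `[h,e] = e`,
`Σ_k ((−ξ)^k/k!) h(h−1)⋯(h−k+1) e^k = exp(−ξ h e)`. -/
theorem fallFac_series_eq_exp {A : Type*} [Ring A] [Algebra ℚ A]
    (h e : A) (hhe : h * e - e * h = e) :
    (PowerSeries.mk fun k =>
        (((-1 : ℚ) ^ k) * (k.factorial : ℚ)⁻¹) • (fallFac h k * e ^ k)) =
      expPS (PowerSeries.mk fun m => if m = 1 then -(h * e) else 0) := by
  have hpow : ∀ k : ℕ, e ^ k * h = (h - (k : A)) * e ^ k := by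
    intro k
    induction k with
    | zero => simp
    | succ k ih =>
      have he : e * h = h * e - e := by
        rw [eq_sub_iff_add_eq]
        exact (sub_eq_iff_eq_add'.mp hhe).symm
      calc e ^ (k + 1) * h = e ^ k * (e * h) := by rw [pow_succ, mul_assoc]
        _ = e ^ k * (h * e) - e ^ k * e := by rw [he, mul_sub]
        _ = ((h - (k : A)) * e ^ k) * e - e ^ k * e := by rw [← mul_assoc, ih]
        _ = (h - ((k + 1 : ℕ) : A)) * e ^ (k + 1) := by
            push_cast [pow_succ]; noncomm_ring
  have hff : ∀ k : ℕ, fallFac h k * e ^ k = (h * e) ^ k := by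
    intro k
    induction k with
    | zero => simp [fallFac]
    | succ k ih =>
      have hf : fallFac h (k + 1) = fallFac h k * (h - (k : A)) := by
        simp [fallFac, List.range_succ]
      calc fallFac h (k + 1) * e ^ (k + 1)
          = fallFac h k * ((h - (k : A)) * e ^ k * e) := by
            rw [hf, pow_succ]; noncomm_ring
        _ = fallFac h k * (e ^ k * h * e) := by rw [← hpow k]
        _ = (fallFac h k * e ^ k) * (h * e) := by noncomm_ring
        _ = (h * e) ^ (k + 1) := by rw [ih, pow_succ]
  have hX : (PowerSeries.mk fun m => if m = 1 then -(h * e) else 0)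
      = PowerSeries.monomial 1 (-(h * e)) := by
    ext m
    simp only [PowerSeries.coeff_mk, PowerSeries.coeff_monomial]
  have hXn : ∀ n : ℕ, (PowerSeries.monomial 1 (-(h * e))) ^ n
      = PowerSeries.monomial n ((-(h * e)) ^ n) := by
    intro n
    induction n with
    | zero => simp
    | succ n ih =>
      rw [pow_succ, ih, pow_succ]
      show MvPowerSeries.monomial (Finsupp.single () n) _ *
        MvPowerSeries.monomial (Finsupp.single () 1) _ = _
      rw [MvPowerSeries.monomial_mul_monomial, ← Finsupp.single_add]
      rfl
  ext m
  rw [hX]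
  simp only [PowerSeries.coeff_mk, expPS, PowerSeries.coeff_mk]
  have hsum : ∑ n ∈ Finset.range (m + 1),
      ((n.factorial : ℚ)⁻¹) • (PowerSeries.coeff m)
        ((PowerSeries.monomial 1 (-(h * e))) ^ n)
      = ((m.factorial : ℚ)⁻¹) • ((-(h * e)) ^ m) := by
    rw [Finset.sum_eq_single m]
    · rw [hXn, PowerSeries.coeff_monomial]; simp
    · intro n hn hne
      rw [hXn, PowerSeries.coeff_monomial, if_neg (fun hc => hne hc.symm)]
      simp
    · intro hm; exact absurd (Finset.self_mem_range_succ m) hm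
  have hneg : (-(h * e)) ^ m = ((-1 : ℚ) ^ m) • (h * e) ^ m := by
    rw [Algebra.smul_def, map_pow, map_neg, map_one]
    exact neg_pow _ _
  rw [hsum, hff m, hneg, smul_smul, mul_comm]
end

section
/- In the Poincaré algebra P(3,1), the two-tensor r₁ = γ h' ∧ h + α P_+ ∧ P_− + ᾶ P₁ ∧ P₂ satisfies the homogeneous classical Yang–Baxter equation, where P_± = P₀ ± P₃ and h = iN₃, h' = iM₃. -/
set_option maxHeartbeats 2000000

open scoped TensorProduct

/-- The Levi-Civita symbol on three indices. -/
def eps : Fin 3 → Fin 3 → Fin 3 → ℤ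
  | 0, 1, 2 => 1
  | 1, 2, 0 => 1
  | 2, 0, 1 => 1
  | 1, 0, 2 => -1
  | 0, 2, 1 => -1
  | 2, 1, 0 => -1
  | _, _, _ => 0

/-- Core computation: in any associative `ℂ`-algebra, six elements satisfying the
relevant commutation relations give a solution of the CYBE. -/
theorem poincare_core {A : Type*} [Ring A] [Algebra ℂ A]
    (a b c d e f : A)
    (hba : b*a = a*b)
    (hca : c*a = a*c) (hda : d*a = a*d)
    (hea : e*a = a*e + f) (hfa : f*a = a*f - e)
    (hcb : c*b = b*c - c) (hdb : d*b = b*d + d)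
    (heb : e*b = b*e) (hfb : f*b = b*f)
    (hdc : d*c = c*d) (hec : e*c = c*e) (hfc : f*c = c*f)
    (hed : e*d = d*e) (hfd : f*d = d*f)
    (hfe : f*e = e*f)
    (γ α α' : ℂ) :
    let w : A → A → A ⊗[ℂ] A := fun u v => u ⊗ₜ[ℂ] v - v ⊗ₜ[ℂ] u
    let r : A ⊗[ℂ] A := γ • w a b + α • w c d + α' • w e f
    let E12 : (A ⊗[ℂ] A) →ₐ[ℂ] A ⊗[ℂ] (A ⊗[ℂ] A) :=
      Algebra.TensorProduct.map (AlgHom.id ℂ A) Algebra.TensorProduct.includeLeft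
    let E13 : (A ⊗[ℂ] A) →ₐ[ℂ] A ⊗[ℂ] (A ⊗[ℂ] A) :=
      Algebra.TensorProduct.map (AlgHom.id ℂ A) Algebra.TensorProduct.includeRight
    let E23 : (A ⊗[ℂ] A) →ₐ[ℂ] A ⊗[ℂ] (A ⊗[ℂ] A) := Algebra.TensorProduct.includeRight
    ⁅E12 r, E13 r⁆ + ⁅E12 r, E23 r⁆ + ⁅E13 r, E23 r⁆ = 0 := by
  intro w r E12 E13 E23
  simp only [w, r, E12, E13, E23, map_add, map_smul, map_sub,
    Algebra.TensorProduct.map_tmul, AlgHom.id_apply,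
    Algebra.TensorProduct.includeLeft_apply, Algebra.TensorProduct.includeRight_apply,
    Ring.lie_def]
  simp only [smul_sub, smul_add, sub_mul, mul_sub, add_mul, mul_add,
    smul_mul_assoc, mul_smul_comm, Algebra.TensorProduct.tmul_mul_tmul,
    one_mul, mul_one]
  simp only [hba, hca, hda, hea, hfa, hcb, hdb, heb, hfb, hdc, hec, hfc, hed, hfd, hfe]
  simp only [TensorProduct.sub_tmul, TensorProduct.tmul_sub, TensorProduct.add_tmul,
    TensorProduct.tmul_add]
  module

/-- in the Poincaré algebra, the r-matrix
`r₁ = γ h' ∧ h + α P₊ ∧ P₋ + ᾶ P₁ ∧ P₂` (with `P_± = P₀ ± P₃`, `h = iN₃`, `h' = iM₃`)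
satisfies the homogeneous classical Yang–Baxter equation. -/
theorem poincare_r1_cybe {L : Type*} [LieRing L] [LieAlgebra ℂ L]
    (M N Pv : Fin 3 → L) (P0 : L)
    (hMM : ∀ i j, ⁅M i, M j⁆ = Complex.I • ∑ k, (eps i j k : ℂ) • M k)
    (hMN : ∀ i j, ⁅M i, N j⁆ = Complex.I • ∑ k, (eps i j k : ℂ) • N k)
    (hNN : ∀ i j, ⁅N i, N j⁆ = -(Complex.I • ∑ k, (eps i j k : ℂ) • M k))
    (hMP : ∀ i j, ⁅M i, Pv j⁆ = Complex.I • ∑ k, (eps i j k : ℂ) • Pv k)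
    (hMP0 : ∀ i, ⁅M i, P0⁆ = 0)
    (hNP : ∀ i j, ⁅N i, Pv j⁆ = if i = j then -(Complex.I • P0) else 0)
    (hNP0 : ∀ i, ⁅N i, P0⁆ = -(Complex.I • Pv i))
    (hPP : ∀ i j, ⁅Pv i, Pv j⁆ = 0)
    (hP0P : ∀ i, ⁅P0, Pv i⁆ = 0)
    (γ α α' : ℂ) :
    let h : L := Complex.I • N 2
    let h' : L := Complex.I • M 2
    let Pp : L := P0 + Pv 2
    let Pm : L := P0 - Pv 2
    let A := UniversalEnvelopingAlgebra ℂ L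
    let ι : L → A := fun v => UniversalEnvelopingAlgebra.ι ℂ v
    -- wedge: u ∧ v = u ⊗ v − v ⊗ u
    let w : L → L → A ⊗[ℂ] A := fun u v => ι u ⊗ₜ[ℂ] ι v - ι v ⊗ₜ[ℂ] ι u
    let r : A ⊗[ℂ] A := γ • w h' h + α • w Pp Pm + α' • w (Pv 0) (Pv 1)
    let E12 : (A ⊗[ℂ] A) →ₐ[ℂ] A ⊗[ℂ] (A ⊗[ℂ] A) :=
      Algebra.TensorProduct.map (AlgHom.id ℂ A) Algebra.TensorProduct.includeLeft
    let E13 : (A ⊗[ℂ] A) →ₐ[ℂ] A ⊗[ℂ] (A ⊗[ℂ] A) :=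
      Algebra.TensorProduct.map (AlgHom.id ℂ A) Algebra.TensorProduct.includeRight
    let E23 : (A ⊗[ℂ] A) →ₐ[ℂ] A ⊗[ℂ] (A ⊗[ℂ] A) := Algebra.TensorProduct.includeRight
    ⁅E12 r, E13 r⁆ + ⁅E12 r, E23 r⁆ + ⁅E13 r, E23 r⁆ = 0 := by
  intro h h' Pp Pm A ι w r E12 E13 E23
  -- Lie brackets among the six relevant elements of L
  have lba : ⁅h', h⁆ = 0 := by
    show ⁅Complex.I • M 2, Complex.I • N 2⁆ = 0
    simp [hMN, Fin.sum_univ_three, eps]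
  have lca : ⁅h', Pp⁆ = 0 := by
    show ⁅Complex.I • M 2, P0 + Pv 2⁆ = 0
    simp [lie_add, hMP, hMP0, Fin.sum_univ_three, eps]
  have lda : ⁅h', Pm⁆ = 0 := by
    show ⁅Complex.I • M 2, P0 - Pv 2⁆ = 0
    simp [lie_sub, hMP, hMP0, Fin.sum_univ_three, eps]
  have lea : ⁅h', Pv 0⁆ = -(Pv 1) := by
    show ⁅Complex.I • M 2, Pv 0⁆ = -(Pv 1)
    have e1 : ((eps 2 0 0 : ℤ) : ℂ) = 0 := by norm_num [eps]; rfl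
    have e2 : ((eps 2 0 1 : ℤ) : ℂ) = 1 := by norm_num [eps]
    have e3 : ((eps 2 0 2 : ℤ) : ℂ) = 0 := by norm_num [eps]; rfl
    rw [smul_lie, hMP, Fin.sum_univ_three, e1, e2, e3]
    simp [smul_smul, Complex.I_mul_I]
  have lfa : ⁅h', Pv 1⁆ = Pv 0 := by
    show ⁅Complex.I • M 2, Pv 1⁆ = Pv 0
    have e1 : ((eps 2 1 0 : ℤ) : ℂ) = -1 := by norm_num [eps]
    have e2 : ((eps 2 1 1 : ℤ) : ℂ) = 0 := by norm_num [eps]; rfl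
    have e3 : ((eps 2 1 2 : ℤ) : ℂ) = 0 := by norm_num [eps]; rfl
    rw [smul_lie, hMP, Fin.sum_univ_three, e1, e2, e3]
    simp [smul_smul, Complex.I_mul_I]
  have lcb : ⁅h, Pp⁆ = Pp := by
    show ⁅Complex.I • N 2, P0 + Pv 2⁆ = P0 + Pv 2
    rw [smul_lie, lie_add, hNP0, hNP]
    simp [smul_smul, Complex.I_mul_I]
    abel
  have ldb : ⁅h, Pm⁆ = -Pm := by
    show ⁅Complex.I • N 2, P0 - Pv 2⁆ = -(P0 - Pv 2)
    rw [smul_lie, lie_sub, hNP0, hNP]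
    simp [smul_smul, Complex.I_mul_I]
    abel
  have leb : ⁅h, Pv 0⁆ = 0 := by
    show ⁅Complex.I • N 2, Pv 0⁆ = 0
    rw [smul_lie, hNP]
    simp
  have lfb : ⁅h, Pv 1⁆ = 0 := by
    show ⁅Complex.I • N 2, Pv 1⁆ = 0
    rw [smul_lie, hNP]
    simp
  have lP0P : ∀ i, ⁅Pv i, P0⁆ = 0 := fun i => by
    rw [← lie_skew, hP0P]; simp
  have ldc : ⁅Pp, Pm⁆ = 0 := by
    show ⁅P0 + Pv 2, P0 - Pv 2⁆ = 0
    simp [lie_add, add_lie, lie_sub, sub_lie, hP0P, lP0P, hPP]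
  have lec : ⁅Pp, Pv 0⁆ = 0 := by
    show ⁅P0 + Pv 2, Pv 0⁆ = 0
    simp [add_lie, hP0P, hPP]
  have lfc : ⁅Pp, Pv 1⁆ = 0 := by
    show ⁅P0 + Pv 2, Pv 1⁆ = 0
    simp [add_lie, hP0P, hPP]
  have led : ⁅Pm, Pv 0⁆ = 0 := by
    show ⁅P0 - Pv 2, Pv 0⁆ = 0
    simp [sub_lie, hP0P, hPP]
  have lfd : ⁅Pm, Pv 1⁆ = 0 := by
    show ⁅P0 - Pv 2, Pv 1⁆ = 0
    simp [sub_lie, hP0P, hPP]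
  have lfe : ⁅Pv 0, Pv 1⁆ = 0 := hPP 0 1
  -- pass to the universal enveloping algebra
  have key : ∀ x y : L, ι y * ι x = ι x * ι y - ι ⁅x, y⁆ := by
    intro x y
    have hxy : ι ⁅x, y⁆ = ι x * ι y - ι y * ι x := by
      show UniversalEnvelopingAlgebra.ι ℂ ⁅x, y⁆ = _
      letI : LieRing (UniversalEnvelopingAlgebra ℂ L) := LieRing.ofAssociativeRing
      rw [LieHom.map_lie, Ring.lie_def]
    rw [hxy]; abel
  have ι0 : ι (0 : L) = 0 := map_zero (UniversalEnvelopingAlgebra.ι ℂ (L := L))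
  have ιneg : ∀ x : L, ι (-x) = -(ι x) :=
    fun x => map_neg (UniversalEnvelopingAlgebra.ι ℂ (L := L)) x
  refine poincare_core (ι h') (ι h) (ι Pp) (ι Pm) (ι (Pv 0)) (ι (Pv 1))
    ?_ ?_ ?_ ?_ ?_ ?_ ?_ ?_ ?_ ?_ ?_ ?_ ?_ ?_ ?_ γ α α'
  · rw [key h' h, lba, ι0, sub_zero]
  · rw [key h' Pp, lca, ι0, sub_zero]
  · rw [key h' Pm, lda, ι0, sub_zero]
  · rw [key h' (Pv 0), lea, ιneg, sub_neg_eq_add]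
  · rw [key h' (Pv 1), lfa]
  · rw [key h Pp, lcb]
  · rw [key h Pm, ldb, ιneg, sub_neg_eq_add]
  · rw [key h (Pv 0), leb, ι0, sub_zero]
  · rw [key h (Pv 1), lfb, ι0, sub_zero]
  · rw [key Pp Pm, ldc, ι0, sub_zero]
  · rw [key Pp (Pv 0), lec, ι0, sub_zero]
  · rw [key Pp (Pv 1), lfc, ι0, sub_zero]
  · rw [key Pm (Pv 0), led, ι0, sub_zero]
  · rw [key Pm (Pv 1), lfd, ι0, sub_zero]
  · rw [key (Pv 0) (Pv 1), lfe, ι0, sub_zero]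
end
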